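/- (Noncommutative Poincaré lemma for free algebras, converse direction) Let k be a field of characteristic 0 and F = k⟨x₁,…,xₙ⟩ the free associative algebra. Suppose f₁,…,fₙ ∈ F satisfy Σᵢ [xᵢ, fᵢ] = 0. Then there exists φ ∈ F such that fᵢ = D_{x_i}(φ) for all i, where D_{x_i} is the cyclic derivative. Explicitly, one may take φ = Σᵢ Σ_{r≥1} (1/r) · xᵢ · fᵢ[r−1], where fᵢ[r−1] is the homogeneous component of fᵢ of degree r−1. -/

import Mathlib

open TensorProduct

namespace NCPaux

open FreeMonoid

variable {k : Type*} [Field k] {n : ℕ}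

noncomputable def ee (k : Type*) [Field k] (n : ℕ) :
    FreeAlgebra k (Fin n) ≃ₐ[k] MonoidAlgebra k (FreeMonoid (Fin n)) :=
  FreeAlgebra.equivMonoidAlgebraFreeMonoid

noncomputable def ω (k : Type*) [Field k] {n : ℕ} : List (Fin n) → FreeAlgebra k (Fin n)
  | [] => 1
  | j :: t => FreeAlgebra.ι k j * ω k t

theorem ω_cons (j : Fin n) (t : List (Fin n)) : ω k (j :: t) = FreeAlgebra.ι k j * ω k t := rfl

theorem ω_append (a b : List (Fin n)) : ω k (a ++ b) = ω k a * ω k b := by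
  induction a with
  | nil => simp [ω]
  | cons j t ih => simp [ω_cons, ih, mul_assoc]

theorem e_ι (j : Fin n) :
    ee k n (FreeAlgebra.ι k j) = MonoidAlgebra.single (of j) 1 := by
  simp [ee, FreeAlgebra.equivMonoidAlgebraFreeMonoid, MonoidAlgebra.of_apply]

theorem e_ω (w : List (Fin n)) :
    ee k n (ω k w) = MonoidAlgebra.single (ofList w) 1 := by
  induction w with
  | nil => simpa [ω, MonoidAlgebra.one_def] using map_one (ee k n)
  | cons j t ih =>
      rw [ω_cons, map_mul, e_ι, ih, MonoidAlgebra.single_mul_single, one_mul, ofList_cons]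

theorem recon (g : FreeAlgebra k (Fin n)) :
    g = (ee k n g).coeff.sum fun m a => a • ω k (toList m) := by
  apply (ee k n).injective
  rw [map_finsuppSum]
  have : (Finsupp.sum ((ee k n) g).coeff fun a b => (ee k n) (b • ω k (toList a)))
      = Finsupp.sum ((ee k n) g).coeff fun m a => MonoidAlgebra.single m a := by
    apply Finsupp.sum_congr
    intro m _
    rw [map_smul, e_ω, ofList_toList, MonoidAlgebra.smul_single, smul_eq_mul, mul_one]
  rw [this, MonoidAlgebra.sum_coeff_single]

noncomputable def cf (g : FreeAlgebra k (Fin n)) (w : List (Fin n)) : k :=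
  (ee k n g).coeff (ofList w)

theorem cf_ω (v w : List (Fin n)) : cf (ω k v) w = if v = w then (1:k) else 0 := by
  classical
  rw [cf, e_ω, MonoidAlgebra.coeff_single, Finsupp.single_apply]
  by_cases h : v = w
  · subst h; rw [if_pos rfl, if_pos rfl]
  · rw [if_neg h, if_neg (fun hh => h (by simpa using congrArg toList hh))]

theorem cf_ι_mul (j m : Fin n) (g : FreeAlgebra k (Fin n)) (w : List (Fin n)) :
    cf (FreeAlgebra.ι k j * g) (m :: w) = if j = m then cf g w else 0 := by
  rw [cf, map_mul, e_ι]
  by_cases hj : j = m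
  · subst hj
    rw [if_pos rfl]
    have H : ∀ a : FreeMonoid (Fin n), of j * a = ofList (j :: w) ↔ a = ofList w := by
      intro a
      constructor
      · intro h
        apply toList.injective
        have h' := congrArg toList h
        rw [toList_of_mul, toList_ofList] at h'
        simpa using h'
      · intro h
        rw [h]
        exact (ofList_cons j w).symm
    rw [MonoidAlgebra.single_mul_apply_aux _ (fun a _ => H a), one_mul, cf]
  · rw [if_neg hj, MonoidAlgebra.single_mul_apply_of_not_exists_mul]
    rintro ⟨d, hd⟩
    have h' := congrArg toList hd
    rw [toList_ofList, toList_of_mul] at h'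
    exact hj ((List.cons.injEq _ _ _ _).mp h').1.symm

theorem cf_mul_ι (m j : Fin n) (g : FreeAlgebra k (Fin n)) (w : List (Fin n)) :
    cf (g * FreeAlgebra.ι k m) (w ++ [j]) = if m = j then cf g w else 0 := by
  rw [cf, map_mul, e_ι]
  by_cases hj : m = j
  · subst hj
    rw [if_pos rfl]
    have H : ∀ a : FreeMonoid (Fin n), a * of m = ofList (w ++ [m]) ↔ a = ofList w := by
      intro a
      constructor
      · intro h
        apply toList.injective
        have h' := congrArg toList h
        rw [toList_mul, toList_of, toList_ofList] at h'
        rw [toList_ofList]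
        exact (List.append_left_inj _).mp h'
      · intro h
        rw [h]
        exact (ofList_append w [m]).symm
    rw [MonoidAlgebra.mul_single_apply_aux _ (fun a _ => H a), mul_one, cf]
  · rw [if_neg hj, MonoidAlgebra.mul_single_apply_of_not_exists_mul]
    rintro ⟨d, hd⟩
    have h' := congrArg toList hd
    rw [toList_ofList, toList_mul, toList_of] at h'
    have hlen : w.length = (toList d).length := by
      have := congrArg List.length h'
      simpa using this
    have := List.append_inj_right h' hlen
    exact hj (by simpa using this.symm)

section Delta

variable (dd : Fin n → (FreeAlgebra k (Fin n) →ₗ[k]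
      FreeAlgebra k (Fin n) ⊗[k] FreeAlgebra k (Fin n)))
  (hLeib : ∀ i (a b : FreeAlgebra k (Fin n)), dd i (a * b) =
      TensorProduct.map LinearMap.id (LinearMap.mulRight k b) (dd i a) +
      TensorProduct.map (LinearMap.mulLeft k a) LinearMap.id (dd i b))
  (hgen : ∀ i j, dd i (FreeAlgebra.ι k j) =
      if i = j then (1 : FreeAlgebra k (Fin n)) ⊗ₜ[k] 1 else 0)

include hLeib in
theorem δ_one (i : Fin n) : dd i 1 = 0 := by
  have h := hLeib i 1 1
  simp only [mul_one, LinearMap.mulRight_one, LinearMap.mulLeft_one, TensorProduct.map_id,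
    LinearMap.id_coe, id_eq] at h
  exact add_eq_right.mp h.symm

include hLeib hgen in
theorem δ_ω (i : Fin n) (w : List (Fin n)) :
    dd i (ω k w) = ∑ s ∈ Finset.range w.length,
      if w[s]? = some i then ω k (w.take s) ⊗ₜ[k] ω k (w.drop (s+1)) else 0 := by
  induction w with
  | nil => simp [ω, δ_one dd hLeib]
  | cons j t ih =>
      have hA : (TensorProduct.map LinearMap.id (LinearMap.mulRight k (ω k t)))
            (if i = j then (1 : FreeAlgebra k (Fin n)) ⊗ₜ[k] 1 else 0) =
          (if (j :: t)[0]? = some i then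
            ω k (List.take 0 (j :: t)) ⊗ₜ[k] ω k (List.drop 1 (j :: t)) else 0) := by
        by_cases hij : i = j
        · subst hij; simp [ω]
        · simp [hij, Ne.symm hij]
      have hB : (TensorProduct.map (LinearMap.mulLeft k (FreeAlgebra.ι k j)) LinearMap.id)
            (∑ s ∈ Finset.range t.length,
              if t[s]? = some i then ω k (t.take s) ⊗ₜ[k] ω k (t.drop (s+1)) else 0) =
          ∑ s ∈ Finset.range t.length,
            (if (j :: t)[s+1]? = some i then
              ω k (List.take (s+1) (j :: t)) ⊗ₜ[k] ω k (List.drop (s+1+1) (j :: t)) else 0) := by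
        rw [map_sum]
        apply Finset.sum_congr rfl
        intro s _
        rw [apply_ite (TensorProduct.map (LinearMap.mulLeft k (FreeAlgebra.ι k j)) LinearMap.id),
          map_zero]
        simp only [List.getElem?_cons_succ, List.take_succ_cons, List.drop_succ_cons,
          TensorProduct.map_tmul, LinearMap.mulLeft_apply, LinearMap.id_coe, id_eq, ω_cons]
      rw [ω_cons, hLeib, ih, hgen, hA, hB]
      simp only [List.length_cons]
      rw [Finset.sum_range_succ'
        (fun s => if (j :: t)[s]? = some i then
          ω k (List.take s (j :: t)) ⊗ₜ[k] ω k (List.drop (s+1) (j :: t)) else 0) t.length]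
      exact add_comm _ _

include hLeib hgen in
theorem D_ω (i : Fin n) (w : List (Fin n)) :
    LinearMap.mul' k (FreeAlgebra k (Fin n))
        ((TensorProduct.comm k _ _) (dd i (ω k w))) =
      ∑ s ∈ Finset.range w.length,
        if w[s]? = some i then ω k (w.drop (s+1) ++ w.take s) else 0 := by
  rw [δ_ω dd hLeib hgen, map_sum, map_sum]
  apply Finset.sum_congr rfl
  intro s _
  rw [apply_ite (TensorProduct.comm k _ _), apply_ite (LinearMap.mul' k _), map_zero, map_zero,
    TensorProduct.comm_tmul, LinearMap.mul'_apply, ω_append]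

end Delta

end NCPaux

open NCPaux FreeMonoid in
/-- (Noncommutative Poincaré lemma for free algebras, converse
direction.)  Let `k` be a field of characteristic `0` and `F = k⟨x₁,…,xₙ⟩`.  Let
`∂/∂xᵢ` be the double derivations determined by `∂xⱼ/∂xᵢ = δᵢⱼ 1⊗1` and the
Leibniz rule for the outer bimodule structure, with cyclic derivatives
`D_{xᵢ} = μ ∘ τ ∘ ∂/∂xᵢ`.  If `f₁,…,fₙ ∈ F` satisfy `∑ᵢ [xᵢ, fᵢ] = 0` then
there exists `φ ∈ F` with `fᵢ = D_{xᵢ}(φ)` for all `i`. -/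
theorem nc_poincare_lemma_free_algebra
    {k : Type*} [Field k] [CharZero k] {n : ℕ}
    (δ : Fin n → (FreeAlgebra k (Fin n) →ₗ[k]
      FreeAlgebra k (Fin n) ⊗[k] FreeAlgebra k (Fin n)))
    (hLeib : ∀ i (a b : FreeAlgebra k (Fin n)), δ i (a * b) =
      TensorProduct.map LinearMap.id (LinearMap.mulRight k b) (δ i a) +
      TensorProduct.map (LinearMap.mulLeft k a) LinearMap.id (δ i b))
    (hgen : ∀ i j, δ i (FreeAlgebra.ι k j) =
      if i = j then (1 : FreeAlgebra k (Fin n)) ⊗ₜ[k] 1 else 0)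
    (f : Fin n → FreeAlgebra k (Fin n))
    (hf : ∑ i : Fin n,
      (FreeAlgebra.ι k i * f i - f i * FreeAlgebra.ι k i) = 0) :
    ∃ φ : FreeAlgebra k (Fin n), ∀ i : Fin n,
      f i = LinearMap.mul' k (FreeAlgebra k (Fin n))
        ((TensorProduct.comm k _ _) (δ i φ)) := by
  classical
  set h : FreeAlgebra k (Fin n) := ∑ j : Fin n, FreeAlgebra.ι k j * f j with hhdef
  have hh2 : h = ∑ j : Fin n, f j * FreeAlgebra.ι k j := by
    have := Finset.sum_sub_distrib (s := (Finset.univ : Finset (Fin n)))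
      (f := fun j => FreeAlgebra.ι k j * f j) (g := fun j => f j * FreeAlgebra.ι k j)
    rw [hf] at this
    exact sub_eq_zero.mp this.symm
  -- coefficient extraction
  have hcL : ∀ (j : Fin n) (w : List (Fin n)), cf h (j :: w) = cf (f j) w := by
    intro j w
    have e1 : cf h (j :: w) = ∑ m : Fin n, cf (FreeAlgebra.ι k m * f m) (j :: w) := by
      rw [hhdef, cf, map_sum, MonoidAlgebra.coeff_sum, Finsupp.finset_sum_apply]
      rfl
    rw [e1, Finset.sum_eq_single j
      (fun m _ hm => by rw [cf_ι_mul, if_neg hm])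
      (fun habs => absurd (Finset.mem_univ j) habs)]
    rw [cf_ι_mul, if_pos rfl]
  have hcR : ∀ (j : Fin n) (w : List (Fin n)), cf h (w ++ [j]) = cf (f j) w := by
    intro j w
    have e1 : cf h (w ++ [j]) = ∑ m : Fin n, cf (f m * FreeAlgebra.ι k m) (w ++ [j]) := by
      rw [hh2, cf, map_sum, MonoidAlgebra.coeff_sum, Finsupp.finset_sum_apply]
      rfl
    rw [e1, Finset.sum_eq_single j
      (fun m _ hm => by rw [cf_mul_ι, if_neg hm])
      (fun habs => absurd (Finset.mem_univ j) habs)]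
    rw [cf_mul_ι, if_pos rfl]
  have hrot : ∀ (j : Fin n) (w : List (Fin n)), cf h (w ++ [j]) = cf h (j :: w) := by
    intro j w; rw [hcR, hcL]
  -- invariance of coefficients of h under the relevant rotations
  have hW : ∀ (i : Fin n) (u : List (Fin n)) (s : ℕ), s ≤ u.length →
      cf h (u.drop s ++ i :: u.take s) = cf h (i :: u) := by
    intro i u s
    induction s with
    | zero =>
        intro _
        simpa using hrot i u
    | succ s ih =>
        intro hs1
        have hs : s < u.length := by omega
        have h1 : u.drop s = u[s] :: u.drop (s+1) := List.drop_eq_getElem_cons hs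
        have h2 : u.take (s+1) = u.take s ++ [u[s]] := (List.take_concat_get' u s hs).symm
        calc cf h (u.drop (s+1) ++ i :: u.take (s+1))
            = cf h ((u.drop (s+1) ++ i :: u.take s) ++ [u[s]]) := by
              rw [h2]
              congr 1
              simp [List.append_assoc]
          _ = cf h (u[s] :: (u.drop (s+1) ++ i :: u.take s)) := hrot _ _
          _ = cf h (u.drop s ++ i :: u.take s) := by rw [h1]; rfl
          _ = cf h (i :: u) := ih (le_of_lt hs)
  refine ⟨∑ m ∈ (ee k n h).coeff.support,
    (((toList m).length : k)⁻¹ * ((ee k n h).coeff m)) • ω k (toList m), ?_⟩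
  intro i
  set Dm : FreeAlgebra k (Fin n) →ₗ[k] FreeAlgebra k (Fin n) :=
    (LinearMap.mul' k _) ∘ₗ (TensorProduct.comm k _ _).toLinearMap ∘ₗ (δ i) with hDm
  show f i = Dm _
  apply (ee k n).injective
  ext mm
  set u : List (Fin n) := toList mm with hu
  show cf (f i) u = cf (Dm _) u
  -- coefficients of Dm on monomials
  have hDω : ∀ (w v : List (Fin n)), cf (Dm (ω k w)) v
      = ∑ s ∈ Finset.range w.length,
          if (w[s]? = some i ∧ w.drop (s+1) ++ w.take s = v) then (1:k) else 0 := by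
    intro w v
    have e1 : Dm (ω k w) = ∑ s ∈ Finset.range w.length,
        if w[s]? = some i then ω k (w.drop (s+1) ++ w.take s) else 0 :=
      D_ω δ hLeib hgen i w
    rw [cf, e1, map_sum, MonoidAlgebra.coeff_sum, Finsupp.finset_sum_apply]
    apply Finset.sum_congr rfl
    intro s _
    rw [apply_ite (ee k n), map_zero,
      apply_ite (fun (F : MonoidAlgebra k (FreeMonoid (Fin n))) => F.coeff (ofList v)),
      MonoidAlgebra.coeff_zero, Finsupp.coe_zero, Pi.zero_apply]
    rw [show ((ee k n) (ω k (w.drop (s+1) ++ w.take s))).coeff (ofList v)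
        = if w.drop (s+1) ++ w.take s = v then (1:k) else 0 from cf_ω _ _]
    rw [← ite_and]
  -- step 1 : expand the coefficient of Dm φ
  have main1 : cf (Dm (∑ m ∈ (ee k n h).coeff.support,
        (((toList m).length : k)⁻¹ * ((ee k n h).coeff m)) • ω k (toList m))) u
      = ∑ m ∈ (ee k n h).coeff.support,
          (((toList m).length : k)⁻¹ * ((ee k n h).coeff m)) * cf (Dm (ω k (toList m))) u := by
    rw [cf, map_sum, map_sum, MonoidAlgebra.coeff_sum, Finsupp.finset_sum_apply]
    apply Finset.sum_congr rfl
    intro m _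
    rw [map_smul, map_smul, MonoidAlgebra.coeff_smul, Finsupp.smul_apply, smul_eq_mul]
    rfl
  have main2 : cf (Dm (∑ m ∈ (ee k n h).coeff.support,
        (((toList m).length : k)⁻¹ * ((ee k n h).coeff m)) • ω k (toList m))) u
      = ∑ x ∈ (((ee k n h).coeff.support.sigma fun m => Finset.range (toList m).length).filter
            (fun x => (toList x.1)[x.2]? = some i ∧
              (toList x.1).drop (x.2+1) ++ (toList x.1).take x.2 = u)),
          ((toList x.1).length : k)⁻¹ * ((ee k n h).coeff x.1) := by
    rw [main1]
    rw [show (∑ m ∈ (ee k n h).coeff.support,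
          (((toList m).length : k)⁻¹ * ((ee k n h).coeff m)) * cf (Dm (ω k (toList m))) u)
        = ∑ m ∈ (ee k n h).coeff.support, ∑ s ∈ Finset.range (toList m).length,
            (if ((toList m)[s]? = some i ∧
                (toList m).drop (s+1) ++ (toList m).take s = u) then
              ((toList m).length : k)⁻¹ * ((ee k n h).coeff m) else 0) from
      Finset.sum_congr rfl fun m _ => by
        rw [hDω, Finset.mul_sum]
        exact Finset.sum_congr rfl fun s _ => by rw [mul_ite, mul_one, mul_zero]]
    rw [Finset.sum_sigma']
    rw [Finset.sum_filter]
  -- structure of the pairs appearing in the filtered sum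
  have struct : ∀ (w : List (Fin n)) (s : ℕ), s < w.length → w[s]? = some i →
      w.drop (s+1) ++ w.take s = u →
      w.length = u.length + 1 ∧ u.length - s ≤ u.length ∧ u.length - (u.length - s) = s ∧
      w = u.drop (u.length - s) ++ i :: u.take (u.length - s) := by
    intro w s hs hgi hr
    have hgi' : w[s] = i := by
      have h1 := List.getElem?_eq_getElem hs
      rw [hgi] at h1
      exact (Option.some_inj.mp h1).symm
    have hlt : (w.take s).length = s := by rw [List.length_take]; omega
    have hld : (w.drop (s+1)).length = w.length - (s+1) := List.length_drop
    have hlu : u.length + 1 = w.length := by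
      have hc := congrArg List.length hr
      rw [List.length_append, hlt, hld] at hc
      omega
    have hm1 : (w.drop (s+1)).length = u.length - s := by omega
    have htk : u.take (u.length - s) = w.drop (s+1) := by
      have h0 := List.take_left' (l₂ := w.take s) hm1
      rw [hr] at h0
      exact h0
    have hdk : u.drop (u.length - s) = w.take s := by
      have h0 := List.drop_left' (l₂ := w.take s) hm1
      rw [hr] at h0
      exact h0
    refine ⟨by omega, by omega, by omega, ?_⟩
    rw [htk, hdk]
    conv_lhs => rw [← List.take_append_drop s w]
    rw [List.drop_eq_getElem_cons hs, hgi']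
  -- reverse structure
  have wstruct : ∀ (m' : ℕ), m' ≤ u.length →
      (u.drop m' ++ i :: u.take m').length = u.length + 1 ∧
      (u.drop m' ++ i :: u.take m')[u.length - m']? = some i ∧
      (u.drop m' ++ i :: u.take m').drop ((u.length - m') + 1) ++
        (u.drop m' ++ i :: u.take m').take (u.length - m') = u := by
    intro m' hm'
    have hld : (u.drop m').length = u.length - m' := List.length_drop
    have hlw : (u.drop m' ++ i :: u.take m').length = u.length + 1 := by
      rw [List.length_append, hld, List.length_cons, List.length_take]
      omega
    refine ⟨hlw, ?_, ?_⟩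
    · rw [List.getElem?_append_right (le_of_eq hld), hld, Nat.sub_self,
        List.getElem?_cons_zero]
    · have ht : (u.drop m' ++ i :: u.take m').take (u.length - m') = u.drop m' :=
        List.take_left' hld
      have hassoc : u.drop m' ++ i :: u.take m' = (u.drop m' ++ [i]) ++ u.take m' := by
        rw [List.append_assoc]; rfl
      have hd : (u.drop m' ++ i :: u.take m').drop ((u.length - m') + 1) = u.take m' := by
        rw [hassoc]
        exact List.drop_left' (by rw [List.length_append, hld, List.length_singleton])
      rw [hd, ht, List.take_append_drop]
  -- the bijection
  have main3 : (∑ x ∈ (((ee k n h).coeff.support.sigma fun m => Finset.range (toList m).length).filter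
            (fun x => (toList x.1)[x.2]? = some i ∧
              (toList x.1).drop (x.2+1) ++ (toList x.1).take x.2 = u)),
          ((toList x.1).length : k)⁻¹ * ((ee k n h).coeff x.1))
      = ∑ m' ∈ (Finset.range (u.length + 1)).filter
            (fun m' => (ee k n h).coeff (ofList (u.drop m' ++ i :: u.take m')) ≠ 0),
          (((u.length + 1 : ℕ) : k))⁻¹ * cf h (i :: u) := by
    apply Finset.sum_bij' (i := fun x _ => u.length - x.2)
      (j := fun m' _ => (⟨ofList (u.drop m' ++ i :: u.take m'), u.length - m'⟩ :
        Σ _ : FreeMonoid (Fin n), ℕ))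
    · -- hi : forward membership
      intro x hx
      rw [Finset.mem_filter] at hx
      obtain ⟨hx1, hP1, hP2⟩ := hx
      rw [Finset.mem_sigma] at hx1
      obtain ⟨hm, hsr⟩ := hx1
      rw [Finset.mem_range] at hsr
      obtain ⟨hw1, hw2, hw3, hw4⟩ := struct (toList x.1) x.2 hsr hP1 hP2
      rw [Finset.mem_filter, Finset.mem_range]
      constructor
      · omega
      · rw [← hw4]
        rw [ofList_toList]
        exact Finsupp.mem_support_iff.mp hm
    · -- hj : backward membership
      intro m' hm'
      rw [Finset.mem_filter, Finset.mem_range] at hm'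
      obtain ⟨hm'1, hm'2⟩ := hm'
      have hle : m' ≤ u.length := by omega
      obtain ⟨hw1, hw2, hw3⟩ := wstruct m' hle
      rw [Finset.mem_filter, Finset.mem_sigma]
      refine ⟨⟨Finsupp.mem_support_iff.mpr hm'2, ?_⟩, ?_, ?_⟩
      · show u.length - m' ∈ Finset.range
          (toList (ofList (u.drop m' ++ i :: u.take m'))).length
        rw [toList_ofList, Finset.mem_range, hw1]
        omega
      · show (toList (ofList (u.drop m' ++ i :: u.take m')))[u.length - m']? = some i
        rw [toList_ofList]
        exact hw2
      · show List.drop ((u.length - m') + 1)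
            (toList (ofList (u.drop m' ++ i :: u.take m')))
          ++ List.take (u.length - m')
            (toList (ofList (u.drop m' ++ i :: u.take m'))) = u
        rw [toList_ofList]
        exact hw3
    · -- left inverse
      intro x hx
      rw [Finset.mem_filter] at hx
      obtain ⟨hx1, hP1, hP2⟩ := hx
      rw [Finset.mem_sigma] at hx1
      obtain ⟨hm, hsr⟩ := hx1
      rw [Finset.mem_range] at hsr
      obtain ⟨hw1, hw2, hw3, hw4⟩ := struct (toList x.1) x.2 hsr hP1 hP2
      have h5 : ofList (List.drop (u.length - x.snd) u ++
          i :: List.take (u.length - x.snd) u) = x.fst := by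
        apply toList.injective
        rw [toList_ofList, hw4]
      have h6 : u.length - (u.length - x.snd) = x.snd := by omega
      rw [h6, h5]
    · -- right inverse
      intro m' hm'
      rw [Finset.mem_filter, Finset.mem_range] at hm'
      show u.length - (u.length - m') = m'
      omega
    · -- value equality
      intro x hx
      rw [Finset.mem_filter] at hx
      obtain ⟨hx1, hP1, hP2⟩ := hx
      rw [Finset.mem_sigma] at hx1
      obtain ⟨hm, hsr⟩ := hx1
      rw [Finset.mem_range] at hsr
      obtain ⟨hw1, hw2, hw3, hw4⟩ := struct (toList x.1) x.2 hsr hP1 hP2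
      rw [hw1]
      congr 1
      have : (ee k n h).coeff x.1 = cf h (toList x.1) := by rw [cf, ofList_toList]
      rw [this, hw4]
      exact hW i u (u.length - x.2) hw2
  -- final arithmetic
  rw [main2, main3, ← hcL i u]
  by_cases hc : cf h (i :: u) = 0
  · rw [hc, mul_zero, Finset.sum_const, smul_zero]
  · have hT : (Finset.range (u.length + 1)).filter
        (fun m' => (ee k n h).coeff (ofList (u.drop m' ++ i :: u.take m')) ≠ 0)
        = Finset.range (u.length + 1) := by
      apply Finset.filter_true_of_mem
      intro m' hm'
      rw [Finset.mem_range] at hm'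
      have hle : m' ≤ u.length := by omega
      have : (ee k n h).coeff (ofList (u.drop m' ++ i :: u.take m')) = cf h (i :: u) :=
        hW i u m' hle
      rw [this]
      exact hc
    rw [hT, Finset.sum_const, Finset.card_range, nsmul_eq_mul, ← mul_assoc,
      mul_inv_cancel₀ (by exact_mod_cast Nat.succ_ne_zero u.length), one_mul]
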